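/- Let 0 < a < b. Then \int_a^b \frac{\ln x}{(x+a)(x+b)} dx = \frac{1}{b-a}\left[\ln(ab)\ln(a+b) - \ln 2 \, \ln(ab) - 2 \ln a \, \ln b\right] + \frac{1}{b-a}\left[\frac{\pi^2}{6} + \mathrm{Li}_2\left(-\frac{b}{a}\right) + \mathrm{Li}_2\left(-\frac{a}{b}\right)\right]. -/

import Mathlib

open Real MeasureTheory

noncomputable def Li2neg (y : ℝ) : ℝ := -∫ t in (0:ℝ)..y, Real.log (1 + t) / t

lemma f_meas : AEStronglyMeasurable (fun t : ℝ => Real.log (1 + t) / t) volume :=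
  ((Real.measurable_log.comp (measurable_const.add measurable_id)).div
    measurable_id).aestronglyMeasurable

lemma f_bound {t : ℝ} (ht : 0 < t) : ‖Real.log (1 + t) / t‖ ≤ 1 := by
  have h1 : (0:ℝ) < 1 + t := by linarith
  rw [Real.norm_eq_abs, abs_div, abs_of_pos ht,
    abs_of_nonneg (Real.log_nonneg (by linarith)), div_le_one ht]
  have := Real.log_le_sub_one_of_pos h1
  linarith

lemma f_intable {y : ℝ} (hy : 0 ≤ y) :
    IntervalIntegrable (fun t : ℝ => Real.log (1 + t) / t) volume 0 y := by
  rw [intervalIntegrable_iff_integrableOn_Ioc_of_le hy]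
  apply Measure.integrableOn_of_bounded (M := 1) measure_Ioc_lt_top.ne f_meas
  filter_upwards [ae_restrict_mem measurableSet_Ioc] with t ht
  exact f_bound ht.1

lemma Li2neg_hasDerivAt {y : ℝ} (hy : 0 < y) :
    HasDerivAt Li2neg (-(Real.log (1 + y) / y)) y := by
  have hc : ContinuousAt (fun t : ℝ => Real.log (1 + t) / t) y := by
    have h1 : (0:ℝ) < 1 + y := by linarith
    exact ((Real.continuousAt_log h1.ne').comp
      ((continuous_const.add continuous_id).continuousAt)).div continuousAt_id hy.ne'
  have h := intervalIntegral.integral_hasDerivAt_right (f_intable hy.le)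
    ⟨Set.univ, Filter.univ_mem, f_meas.restrict⟩ hc
  exact h.neg

lemma G_hasDeriv {c x : ℝ} (hc : 0 < c) (hx : 0 < x) :
    HasDerivAt (fun x => Real.log x * Real.log (1 + x / c) + Li2neg (x / c))
      (Real.log x / (x + c)) x := by
  have hpos : 0 < 1 + x / c := by positivity
  have h1 : HasDerivAt Real.log x⁻¹ x := Real.hasDerivAt_log hx.ne'
  have hin : HasDerivAt (fun x : ℝ => 1 + x / c) (1 / c) x := by
    simpa using ((hasDerivAt_id x).div_const c).const_add 1
  have h2 : HasDerivAt (fun x => Real.log (1 + x / c)) ((1 / c) / (1 + x / c)) x :=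
    hin.log hpos.ne'
  have hdiv : HasDerivAt (fun x : ℝ => x / c) (1 / c) x := (hasDerivAt_id x).div_const c
  have h3 : HasDerivAt (fun x => Li2neg (x / c))
      (-(Real.log (1 + x / c) / (x / c)) * (1 / c)) x :=
    (Li2neg_hasDerivAt (by positivity)).comp x hdiv
  have h : HasDerivAt (fun x => Real.log x * Real.log (1 + x / c) + Li2neg (x / c)) _ x :=
    (h1.mul h2).add h3
  convert h using 1
  have hxc : x + c ≠ 0 := by positivity
  field_simp
  ring

-- series lemmas
lemma hasSum_shift : HasSum (fun n : ℕ => 1 / ((n : ℝ) + 1) ^ 2) (π ^ 2 / 6) := by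
  have h2 := (hasSum_nat_add_iff' (f := fun n : ℕ => (1:ℝ) / (n : ℝ) ^ 2) 1).mpr hasSum_zeta_two
  simpa using h2

lemma hasSum_alt : HasSum (fun n : ℕ => (-1 : ℝ) ^ n / ((n : ℝ) + 1) ^ 2) (π ^ 2 / 12) := by
  have hodd : HasSum (fun m : ℕ => (2 : ℝ) / (((2 * m + 1 : ℕ) : ℝ) + 1) ^ 2) (π ^ 2 / 12) := by
    have h := hasSum_shift.mul_left (1 / 2)
    have he : (fun m : ℕ => (1 / 2 : ℝ) * (1 / ((m : ℝ) + 1) ^ 2)) =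
        fun m : ℕ => (2 : ℝ) / (((2 * m + 1 : ℕ) : ℝ) + 1) ^ 2 := by
      funext m
      have : ((m : ℝ) + 1) ≠ 0 := by positivity
      push_cast
      field_simp
      ring
    rw [he] at h
    rw [show (π ^ 2 / 12 : ℝ) = 1 / 2 * (π ^ 2 / 6) by ring]
    exact h
  set k : ℕ → ℝ := fun n => if Odd n then 2 / ((n : ℝ) + 1) ^ 2 else 0 with hk
  have hkSum : HasSum k (π ^ 2 / 12) := by
    have hinj : Function.Injective (fun m : ℕ => 2 * m + 1) := by
      intro a b h
      simp only at h
      omega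
    rw [← Function.Injective.hasSum_iff hinj]
    · have hcomp : (k ∘ fun m : ℕ => 2 * m + 1) =
          fun m : ℕ => (2 : ℝ) / (((2 * m + 1 : ℕ) : ℝ) + 1) ^ 2 := by
        funext m
        have hoddm : Odd (2 * m + 1) := ⟨m, by ring⟩
        simp only [Function.comp, hk, if_pos hoddm]
      rw [hcomp]
      exact hodd
    · intro x hx
      have hno : ¬ Odd x := by
        rintro ⟨m, rfl⟩
        exact hx ⟨m, by simp⟩
      simp [hk, hno]
  have h := hasSum_shift.sub hkSum
  have he : (fun n : ℕ => 1 / ((n : ℝ) + 1) ^ 2 - k n) =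
      fun n : ℕ => (-1 : ℝ) ^ n / ((n : ℝ) + 1) ^ 2 := by
    funext n
    rcases Nat.even_or_odd n with hn | hn
    · rw [hk]
      simp [Nat.not_odd_iff_even.mpr hn, hn.neg_one_pow]
    · rw [hk]
      simp only [hn, if_pos]
      rw [hn.neg_one_pow]
      ring
  rw [he] at h
  convert h using 1
  · rfl
  ring

lemma Li2neg_one : Li2neg 1 = -(π ^ 2 / 12) := by
  have hF_int : ∀ n : ℕ, Integrable (fun t : ℝ => (-1 : ℝ) ^ n * t ^ n / ((n : ℝ) + 1))
      (volume.restrict (Set.Ioc (0:ℝ) 1)) := by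
    intro n
    apply Continuous.integrableOn_Ioc
    continuity
  have hnorm : ∀ n : ℕ, ∫ t in Set.Ioc (0:ℝ) 1, ‖(-1 : ℝ) ^ n * t ^ n / ((n : ℝ) + 1)‖ =
      1 / ((n : ℝ) + 1) ^ 2 := by
    intro n
    have hco : ∀ t ∈ Set.Ioc (0:ℝ) 1, ‖(-1 : ℝ) ^ n * t ^ n / ((n : ℝ) + 1)‖ =
        t ^ n / ((n : ℝ) + 1) := by
      intro t ht
      have h1 : (0:ℝ) < (n : ℝ) + 1 := by positivity
      rw [Real.norm_eq_abs, abs_div, abs_mul, abs_pow, abs_neg, abs_one, one_pow, one_mul,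
        abs_pow, abs_of_pos ht.1, abs_of_pos h1]
    rw [setIntegral_congr_fun measurableSet_Ioc hco, ← intervalIntegral.integral_of_le zero_le_one]
    rw [intervalIntegral.integral_div, integral_pow]
    have h1 : ((n : ℝ) + 1) ≠ 0 := by positivity
    field_simp
    ring
  have hval : ∀ n : ℕ, ∫ t in Set.Ioc (0:ℝ) 1, (-1 : ℝ) ^ n * t ^ n / ((n : ℝ) + 1) =
      (-1 : ℝ) ^ n / ((n : ℝ) + 1) ^ 2 := by
    intro n
    rw [← intervalIntegral.integral_of_le zero_le_one]
    have : ∀ t : ℝ, (-1 : ℝ) ^ n * t ^ n / ((n : ℝ) + 1) =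
        ((-1 : ℝ) ^ n / ((n : ℝ) + 1)) * t ^ n := by intro t; ring
    simp_rw [this]
    rw [intervalIntegral.integral_const_mul, integral_pow]
    have h1 : ((n : ℝ) + 1) ≠ 0 := by positivity
    field_simp
    ring
  have hsum := MeasureTheory.hasSum_integral_of_summable_integral_norm
    (μ := volume.restrict (Set.Ioc (0:ℝ) 1)) hF_int (by
      simp_rw [hnorm]
      exact hasSum_shift.summable)
  simp_rw [hval] at hsum
  have heq : ∫ t in Set.Ioc (0:ℝ) 1, (∑' n : ℕ, (-1 : ℝ) ^ n * t ^ n / ((n : ℝ) + 1)) =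
      ∫ t in Set.Ioc (0:ℝ) 1, Real.log (1 + t) / t := by
    apply integral_congr_ae
    have h1 : (Set.Ioo (0:ℝ) 1) ∈ ae (volume.restrict (Set.Ioc (0:ℝ) 1)) := by
      rw [mem_ae_iff]
      rw [Measure.restrict_apply (measurableSet_Ioo.compl)]
      have : (Set.Ioo (0:ℝ) 1)ᶜ ∩ Set.Ioc 0 1 ⊆ {1} := by
        intro x hx
        obtain ⟨hx1, hx2⟩ := hx
        have hx5 : ¬ x < 1 := fun hlt => hx1 ⟨hx2.1, hlt⟩
        have hx6 : x = 1 := le_antisymm hx2.2 (not_lt.mp hx5)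
        simp [hx6]
      exact measure_mono_null this (measure_singleton 1)
    filter_upwards [h1] with t ht
    have ht0 : 0 < t := ht.1
    have ht1 : t < 1 := ht.2
    have habs : |(-t)| < 1 := by rw [abs_neg, abs_of_pos ht0]; exact ht1
    have h := (hasSum_pow_div_log_of_abs_lt_one habs).mul_right (-1 / t)
    have he : (fun n : ℕ => (-t) ^ (n + 1) / ((n : ℝ) + 1) * (-1 / t)) =
        fun n : ℕ => (-1 : ℝ) ^ n * t ^ n / ((n : ℝ) + 1) := by
      funext n
      rw [neg_pow]
      rw [pow_succ (-1 : ℝ) n, pow_succ t n]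
      field_simp
    rw [he] at h
    have hv : -Real.log (1 - -t) * (-1 / t) = Real.log (1 + t) / t := by
      rw [sub_neg_eq_add]
      field_simp
    rw [hv] at h
    exact h.tsum_eq
  rw [heq] at hsum
  have := hsum.unique hasSum_alt
  rw [Li2neg, intervalIntegral.integral_of_le zero_le_one]
  rw [← this]

theorem integral_log_div_shifted (a b : ℝ) (ha : 0 < a) (hab : a < b) :
    ∫ x in a..b, Real.log x / ((x + a) * (x + b)) =
      (1 / (b - a)) *
        (Real.log (a * b) * Real.log (a + b) - Real.log 2 * Real.log (a * b) -
          2 * Real.log a * Real.log b) +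
      (1 / (b - a)) * (Real.pi ^ 2 / 6 + Li2neg (b / a) + Li2neg (a / b)) := by
  have hb : 0 < b := ha.trans hab
  have hba : (0:ℝ) < b - a := by linarith
  set F : ℝ → ℝ := fun x => (1 / (b - a)) *
    ((Real.log x * Real.log (1 + x / a) + Li2neg (x / a)) -
     (Real.log x * Real.log (1 + x / b) + Li2neg (x / b))) with hFdef
  have key : ∀ x ∈ Set.uIcc a b, HasDerivAt F (Real.log x / ((x + a) * (x + b))) x := by
    intro x hx
    rw [Set.uIcc_of_le hab.le] at hx
    have hx0 : 0 < x := lt_of_lt_of_le ha hx.1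
    have h : HasDerivAt F _ x :=
      ((G_hasDeriv ha hx0).sub (G_hasDeriv hb hx0)).const_mul (1 / (b - a))
    convert h using 1
    have hxa : x + a ≠ 0 := by positivity
    have hxb : x + b ≠ 0 := by positivity
    field_simp
    ring
  have hint : IntervalIntegrable (fun x => Real.log x / ((x + a) * (x + b))) volume a b := by
    apply ContinuousOn.intervalIntegrable
    intro x hx
    rw [Set.uIcc_of_le hab.le] at hx
    have hx0 : 0 < x := lt_of_lt_of_le ha hx.1
    have hxa : x + a ≠ 0 := by positivity
    have hxb : x + b ≠ 0 := by positivity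
    exact ((Real.continuousAt_log hx0.ne').continuousWithinAt).div
      (((continuous_id.add continuous_const).mul
        (continuous_id.add continuous_const)).continuousWithinAt)
      (by simpa using mul_ne_zero hxa hxb)
  rw [intervalIntegral.integral_eq_sub_of_hasDerivAt key hint]
  rw [hFdef]
  have hs1 : 1 + b / a = (a + b) / a := by field_simp; try ring
  have hs2 : 1 + a / b = (a + b) / b := by field_simp; try ring
  have hs3 : b / b = 1 := div_self hb.ne'
  have hs4 : a / a = 1 := div_self ha.ne'
  have hs5 : (1 : ℝ) + 1 = 2 := by norm_num
  simp only [hs1, hs2, hs3, hs4, hs5]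
  rw [Real.log_div (by positivity) ha.ne', Real.log_div (by positivity) hb.ne',
    Real.log_mul ha.ne' hb.ne', Li2neg_one]
  ring
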